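/- Let h be a p-to-e calibrator (decreasing, ∫₀¹ h ≤ 1, h = 0 on (1,∞)). If P₁,…,P_K are compound p-variables for (P₁,…,P_K) under an atomless universe P, then h(P₁),…,h(P_K) are compound e-variables: for every P ∈ P, Σ_{k : P ∈ P_k} E^P[h(P_k)] ≤ K. -/

import Mathlib

open MeasureTheory
open scoped ENNReal
open scoped Classical

/-- Layer cake formula for `ℝ≥0∞`-valued functions. -/
lemma layercake_ennreal {α : Type*} [MeasurableSpace α] (μ : Measure α) [SFinite μ]
    {g : α → ℝ≥0∞} (hg : Measurable g) :
    ∫⁻ a, g a ∂μ = ∫⁻ t in Set.Ioi (0:ℝ), μ {a | ENNReal.ofReal t < g a} := by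
  have hsetm : ∀ c : ℝ≥0∞, MeasurableSet {t : ℝ | ENNReal.ofReal t < c} := fun c =>
    ENNReal.measurable_ofReal measurableSet_Iio
  have key : ∀ c : ℝ≥0∞,
      ∫⁻ t in Set.Ioi (0:ℝ), Set.indicator {t : ℝ | ENNReal.ofReal t < c}
        (1 : ℝ → ℝ≥0∞) t = c := by
    intro c
    rw [lintegral_indicator_one (hsetm c), Measure.restrict_apply (hsetm c)]
    by_cases hc : c = ∞
    · have : {t : ℝ | ENNReal.ofReal t < c} ∩ Set.Ioi 0 = Set.Ioi 0 := by
        simp [hc, Set.inter_eq_right, Set.subset_def, ENNReal.ofReal_lt_top]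
      rw [this, Real.volume_Ioi, hc]
    · have : {t : ℝ | ENNReal.ofReal t < c} ∩ Set.Ioi 0 = Set.Ioo 0 c.toReal := by
        ext t
        simp only [Set.mem_inter_iff, Set.mem_setOf_eq, Set.mem_Ioi, Set.mem_Ioo]
        constructor
        · rintro ⟨hlt, ht⟩
          exact ⟨ht, (ENNReal.ofReal_lt_iff_lt_toReal ht.le hc).mp hlt⟩
        · rintro ⟨ht, hlt⟩
          exact ⟨(ENNReal.ofReal_lt_iff_lt_toReal ht.le hc).mpr hlt, ht⟩
      rw [this, Real.volume_Ioo, sub_zero, ENNReal.ofReal_toReal hc]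
  have hT : MeasurableSet {p : α × ℝ | ENNReal.ofReal p.2 < g p.1} :=
    measurableSet_lt (ENNReal.measurable_ofReal.comp measurable_snd) (hg.comp measurable_fst)
  have swap := lintegral_lintegral_swap (μ := μ) (ν := volume.restrict (Set.Ioi (0:ℝ)))
    (f := fun a t => Set.indicator {t : ℝ | ENNReal.ofReal t < g a} (1 : ℝ → ℝ≥0∞) t)
    (by
      have : (Function.uncurry fun a t =>
          Set.indicator {t : ℝ | ENNReal.ofReal t < g a} (1 : ℝ → ℝ≥0∞) t) =
          Set.indicator {p : α × ℝ | ENNReal.ofReal p.2 < g p.1} (1 : α × ℝ → ℝ≥0∞) := by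
        ext p
        simp [Function.uncurry, Set.indicator_apply]
      rw [this]
      exact ((measurable_const.indicator hT)).aemeasurable)
  calc ∫⁻ a, g a ∂μ
      = ∫⁻ a, (∫⁻ t in Set.Ioi (0:ℝ),
          Set.indicator {t : ℝ | ENNReal.ofReal t < g a} (1 : ℝ → ℝ≥0∞) t) ∂μ := by
        simp_rw [key]
    _ = ∫⁻ t in Set.Ioi (0:ℝ), (∫⁻ a,
          Set.indicator {t' : ℝ | ENNReal.ofReal t' < g a} (1 : ℝ → ℝ≥0∞) t ∂μ) := swap
    _ = ∫⁻ t in Set.Ioi (0:ℝ), μ {a | ENNReal.ofReal t < g a} := by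
        refine lintegral_congr fun t => ?_
        have : (fun a => Set.indicator {t' : ℝ | ENNReal.ofReal t' < g a}
            (1 : ℝ → ℝ≥0∞) t) =
            Set.indicator {a | ENNReal.ofReal t < g a} (1 : α → ℝ≥0∞) := by
          ext a; simp [Set.indicator_apply]
        rw [this, lintegral_indicator_one]
        exact measurableSet_lt measurable_const hg

/-- Calibrating compound p-variables with a p-to-e calibrator yields compound e-variables,
under an atomless universe (each `P ∈ Unv` admits a uniform random variable). -/
theorem compound_p_to_compound_e {Ω : Type*} [MeasurableSpace Ω] {K : ℕ}
    (H : Fin K → Set (Measure Ω)) (Unv : Set (Measure Ω))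
    (hprob : ∀ P ∈ Unv, IsProbabilityMeasure P)
    (hatomless : ∀ P ∈ Unv, ∃ U : Ω → ℝ, Measurable U ∧
      Measure.map U P = volume.restrict (Set.Icc (0:ℝ) 1))
    (h : ℝ → ℝ≥0∞) (hanti : Antitone h)
    (hint : ∫⁻ x in Set.Ioo (0:ℝ) 1, h x ≤ 1)
    (hzero : ∀ x : ℝ, 1 < x → h x = 0)
    (X : Fin K → Ω → ℝ) (hX : ∀ k, Measurable (X k)) (hXnn : ∀ k ω, 0 ≤ X k ω)
    (hp : ∀ P ∈ Unv, ∀ t : ℝ, 0 < t → t < 1 →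
      ∑ k ∈ Finset.univ.filter (fun k => P ∈ H k),
        P {ω | X k ω ≤ t} ≤ (K : ℝ≥0∞) * ENNReal.ofReal t) :
    ∀ P ∈ Unv,
      ∑ k ∈ Finset.univ.filter (fun k => P ∈ H k), ∫⁻ ω, h (X k ω) ∂P ≤ K := by
  intro P hP
  haveI := hprob P hP
  have hhm : Measurable h := hanti.measurable
  have hgk : ∀ k, Measurable fun ω => h (X k ω) := fun k => hhm.comp (hX k)
  set S := Finset.univ.filter (fun k => P ∈ H k) with hS
  -- measure of superlevel sets, as a function of the level, is antitone hence measurable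
  have hmk : ∀ k : Fin K, Measurable fun t : ℝ => P {ω | ENNReal.ofReal t < h (X k ω)} := by
    intro k
    refine Antitone.measurable fun t₁ t₂ hle => ?_
    exact measure_mono fun ω hω => lt_of_le_of_lt (ENNReal.ofReal_le_ofReal hle) hω
  have hmvol : Measurable fun t : ℝ =>
      (volume.restrict (Set.Ioo (0:ℝ) 1)) {x | ENNReal.ofReal t < h x} := by
    refine Antitone.measurable fun t₁ t₂ hle => ?_
    exact measure_mono fun x hx => lt_of_le_of_lt (ENNReal.ofReal_le_ofReal hle) hx
  -- the key pointwise bound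
  have pointwise : ∀ t : ℝ, 0 < t →
      ∑ k ∈ S, P {ω | ENNReal.ofReal t < h (X k ω)} ≤
        (K : ℝ≥0∞) * (volume.restrict (Set.Ioo (0:ℝ) 1)) {x | ENNReal.ofReal t < h x} := by
    intro t ht
    have hAm : MeasurableSet {x : ℝ | ENNReal.ofReal t < h x} :=
      measurableSet_lt measurable_const hhm
    rw [Measure.restrict_apply hAm]
    set A := {x : ℝ | ENNReal.ofReal t < h x} ∩ Set.Ioo (0:ℝ) 1 with hA
    have hAle : volume A ≤ 1 := by
      refine le_trans (measure_mono Set.inter_subset_right) ?_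
      simp [Real.volume_Ioo]
    have hAfin : volume A ≠ ∞ := (lt_of_le_of_lt hAle ENNReal.one_lt_top).ne
    set s := (volume A).toReal with hs
    have hs0 : 0 ≤ s := ENNReal.toReal_nonneg
    have hs1 : s ≤ 1 := by
      rw [hs]
      calc (volume A).toReal ≤ (1 : ℝ≥0∞).toReal :=
            ENNReal.toReal_mono ENNReal.one_ne_top hAle
        _ = 1 := by simp
    have hvol : volume A = ENNReal.ofReal s := (ENNReal.ofReal_toReal hAfin).symm
    -- superlevel sets of h ∘ X k are contained in sublevel sets of X k
    have hsub : ∀ k : Fin K, {ω | ENNReal.ofReal t < h (X k ω)} ⊆ {ω | X k ω ≤ s} := by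
      intro k ω hω
      simp only [Set.mem_setOf_eq] at hω ⊢
      by_contra hx
      push_neg at hx
      have hx1 : X k ω ≤ 1 := by
        by_contra h1
        push_neg at h1
        rw [hzero _ h1] at hω
        exact (not_lt.2 zero_le) hω
      have hIoo : Set.Ioo (0:ℝ) (X k ω) ⊆ A := by
        intro y hy
        exact ⟨lt_of_lt_of_le hω (hanti hy.2.le), hy.1, lt_of_lt_of_le hy.2 hx1⟩
      have hle : ENNReal.ofReal (X k ω) ≤ volume A := by
        calc ENNReal.ofReal (X k ω) = volume (Set.Ioo (0:ℝ) (X k ω)) := by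
              simp [Real.volume_Ioo]
          _ ≤ volume A := measure_mono hIoo
      rw [hvol] at hle
      exact absurd ((ENNReal.ofReal_le_ofReal_iff hs0).mp hle) (not_le.2 hx)
    have step1 : ∑ k ∈ S, P {ω | ENNReal.ofReal t < h (X k ω)} ≤
        ∑ k ∈ S, P {ω | X k ω ≤ s} :=
      Finset.sum_le_sum fun k _ => measure_mono (hsub k)
    have step2 : ∑ k ∈ S, P {ω | X k ω ≤ s} ≤ (K : ℝ≥0∞) * ENNReal.ofReal s := by
      rcases lt_or_eq_of_le hs1 with hslt | hseq
      · -- s < 1 : approximate from the right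
        have htend : Filter.Tendsto (fun u : ℝ => (K : ℝ≥0∞) * ENNReal.ofReal u)
            (nhdsWithin s (Set.Ioi s)) (nhds ((K : ℝ≥0∞) * ENNReal.ofReal s)) := by
          refine ENNReal.Tendsto.const_mul ?_ (Or.inr (ENNReal.natCast_ne_top K))
          exact (ENNReal.continuous_ofReal.tendsto s).mono_left nhdsWithin_le_nhds
        refine ge_of_tendsto htend ?_
        filter_upwards [Ioo_mem_nhdsGT_of_mem ⟨le_refl s, hslt⟩] with u hu
        calc ∑ k ∈ S, P {ω | X k ω ≤ s} ≤ ∑ k ∈ S, P {ω | X k ω ≤ u} :=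
              Finset.sum_le_sum fun k _ =>
                measure_mono fun ω hω => le_trans hω hu.1.le
          _ ≤ (K : ℝ≥0∞) * ENNReal.ofReal u :=
              hp P hP u (lt_of_le_of_lt hs0 hu.1) hu.2
      · -- s = 1 : trivial bound
        calc ∑ k ∈ S, P {ω | X k ω ≤ s} ≤ ∑ _k ∈ S, (1 : ℝ≥0∞) :=
              Finset.sum_le_sum fun k _ => prob_le_one
          _ = (S.card : ℝ≥0∞) := by simp
          _ ≤ (K : ℝ≥0∞) := by
              refine Nat.cast_le.mpr ?_
              calc S.card ≤ (Finset.univ : Finset (Fin K)).card := Finset.card_filter_le _ _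
                _ = K := by simp
          _ = (K : ℝ≥0∞) * ENNReal.ofReal s := by rw [hseq]; simp
    exact le_trans (le_trans step1 step2) (by rw [hvol])
  -- put everything together
  calc ∑ k ∈ S, ∫⁻ ω, h (X k ω) ∂P
      = ∑ k ∈ S, ∫⁻ t in Set.Ioi (0:ℝ), P {ω | ENNReal.ofReal t < h (X k ω)} :=
        Finset.sum_congr rfl fun k _ => layercake_ennreal P (hgk k)
    _ = ∫⁻ t in Set.Ioi (0:ℝ), ∑ k ∈ S, P {ω | ENNReal.ofReal t < h (X k ω)} :=
        (lintegral_finset_sum S fun k _ => hmk k).symm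
    _ ≤ ∫⁻ t in Set.Ioi (0:ℝ),
          (K : ℝ≥0∞) * (volume.restrict (Set.Ioo (0:ℝ) 1)) {x | ENNReal.ofReal t < h x} := by
        refine lintegral_mono_ae ?_
        filter_upwards [self_mem_ae_restrict measurableSet_Ioi] with t ht
        exact pointwise t ht
    _ = (K : ℝ≥0∞) * ∫⁻ t in Set.Ioi (0:ℝ),
          (volume.restrict (Set.Ioo (0:ℝ) 1)) {x | ENNReal.ofReal t < h x} :=
        lintegral_const_mul _ hmvol
    _ = (K : ℝ≥0∞) * ∫⁻ x in Set.Ioo (0:ℝ) 1, h x := by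
        rw [← layercake_ennreal (volume.restrict (Set.Ioo (0:ℝ) 1)) hhm]
    _ ≤ (K : ℝ≥0∞) * 1 := mul_le_mul_right hint _
    _ = (K : ℝ≥0∞) := mul_one _
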